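/- (Proposition 3.2, case (iii): small terminal cost, small incentive and small remaining running cost.) Fix an integer N ≥ 2, a time horizon T > 0 and a > 0. Then there exists δ > 0 such that for all parameters q, ε, c with 0 ≤ q < δ, 0 ≤ c < δ, q² ≤ ε and 0 ≤ ε − q² < δ, the unique C¹ solution K on [0,T] of K'(t) = 2βK(t) + γ_N K(t)² − λ with K(T) = c satisfies the convergence condition ((1 − e^{−2Tγ̲})/γ̲) · C < 1. -/

import Mathlib

open Set Filter Topology


lemma no_cross_up (T M : ℝ) (K f : ℝ → ℝ)
    (hK : ∀ t ∈ Icc (0:ℝ) T, HasDerivAt K (f (K t)) t)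
    (hfM : 0 < f M) (hKT : K T < M) :
    ∀ t ∈ Icc (0:ℝ) T, K t < M := by
  by_contra h
  push_neg at h
  obtain ⟨t₀, ht₀, hMt₀⟩ := h
  set S : Set ℝ := {t | t ∈ Icc t₀ T ∧ M ≤ K t} with hS
  have hSne : S.Nonempty := ⟨t₀, ⟨le_refl _, ht₀.2⟩, hMt₀⟩
  have hSbdd : BddAbove S := ⟨T, fun t ht => ht.1.2⟩
  set t₁ := sSup S with ht₁def
  have ht₁mem : t₁ ∈ Icc t₀ T :=
    ⟨le_csSup hSbdd ⟨⟨le_refl _, ht₀.2⟩, hMt₀⟩, csSup_le hSne fun t ht => ht.1.2⟩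
  have ht₁Icc : t₁ ∈ Icc (0:ℝ) T := ⟨le_trans ht₀.1 ht₁mem.1, ht₁mem.2⟩
  have hd := hK t₁ ht₁Icc
  have hcont : ContinuousAt K t₁ := hd.continuousAt
  have hMt₁ : M ≤ K t₁ := by
    have hcl : t₁ ∈ closure S := csSup_mem_closure hSne hSbdd
    have hcp : ClusterPt t₁ (𝓟 S) := mem_closure_iff_clusterPt.mp hcl
    haveI : (𝓝 t₁ ⊓ 𝓟 S).NeBot := hcp
    have htd : Tendsto K (𝓝 t₁ ⊓ 𝓟 S) (𝓝 (K t₁)) := hcont.mono_left inf_le_left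
    exact ge_of_tendsto htd (mem_inf_of_right (fun t ht => ht.2))
  have ht₁T : t₁ < T := lt_of_le_of_ne ht₁mem.2 (by
    intro hEq; rw [hEq] at hMt₁; exact absurd hMt₁ (not_le.mpr hKT))
  have hlt : ∀ t ∈ Ioc t₁ T, K t < M := by
    intro t ht
    by_contra hge
    push_neg at hge
    have htS : t ∈ S := ⟨⟨le_trans ht₁mem.1 ht.1.le, ht.2⟩, hge⟩
    exact absurd (le_csSup hSbdd htS) (not_le.mpr ht.1)
  have hslope : Tendsto (slope K t₁) (𝓝[>] t₁) (𝓝 (f (K t₁))) :=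
    (hasDerivAt_iff_tendsto_slope.mp hd).mono_left
      (nhdsWithin_mono _ fun x hx => (ne_of_lt hx).symm)
  have hle : f (K t₁) ≤ 0 := by
    refine le_of_tendsto hslope ?_
    filter_upwards [Ioc_mem_nhdsGT_of_mem ⟨le_refl t₁, ht₁T⟩] with t ht
    rw [slope_def_field]
    apply div_nonpos_of_nonpos_of_nonneg
    · have := hlt t ht; linarith
    · linarith [ht.1]
  have hKt₁le : K t₁ ≤ M := by
    have htdK : Tendsto K (𝓝[>] t₁) (𝓝 (K t₁)) :=
      (hcont.continuousWithinAt : ContinuousWithinAt K (Ioi t₁) t₁).tendsto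
    refine le_of_tendsto htdK ?_
    filter_upwards [Ioc_mem_nhdsGT_of_mem ⟨le_refl t₁, ht₁T⟩] with t ht
    exact (hlt t ht).le
  have hKt₁ : K t₁ = M := le_antisymm hKt₁le hMt₁
  rw [hKt₁] at hle
  linarith

set_option maxHeartbeats 1000000 in
/-- Proposition 3.2, case (iii): small terminal cost, small incentive,
small remaining running cost. With `N`, `T` and `a > 0` fixed, there is `δ > 0` such
that for all `q, ε, c` with `0 ≤ q < δ`, `0 ≤ c < δ`, `q² ≤ ε` and `ε − q² < δ`,
the C¹ solution `K` on `[0,T]` of the Riccati terminal value problem satisfies the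
convergence condition `((1 − e^{−2Tγ̲})/γ̲) · C < 1`. -/
theorem convergence_condition_small_costs
    (N : ℕ) (hN : 2 ≤ N) (T a : ℝ) (hT : 0 < T) (ha : 0 < a) :
    ∃ δ > (0 : ℝ), ∀ q ε c : ℝ,
      0 ≤ q → q < δ → 0 ≤ c → c < δ → q ^ 2 ≤ ε → ε - q ^ 2 < δ →
      ∀ K : ℝ → ℝ,
      (∀ t ∈ Icc (0 : ℝ) T, HasDerivAt K
        (2 * (a + (1 - 1 / (N : ℝ)) * q) * K t
          + (1 - 1 / (N : ℝ)) ^ 2 * K t ^ 2 - (ε - q ^ 2)) t) →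
      K T = c →
      (let Kbar := sSup (K '' Icc (0 : ℝ) T);
       let Kmin := sInf (K '' Icc (0 : ℝ) T);
       let glo := a + (1 - 1 / (N : ℝ)) * q + (1 - 1 / (N : ℝ)) ^ 2 * Kmin;
       let C := (1 - 1 / (N : ℝ)) ^ 2 *
         ((1 - 1 / (N : ℝ)) ^ 2 * Kbar ^ 2 +
          (q + (1 - 1 / (N : ℝ)) * Kbar) ^ 2 *
            ((1 - Real.exp (-(2 * T * glo))) / glo * (1 - 1 / (N : ℝ)) ^ 4 * Kbar ^ 2 + 2));
       (1 - Real.exp (-(2 * T * glo))) / glo * C < 1) := by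
  set M : ℝ := min 1 (a ^ 2 / (18 * a + 17)) with hMdef
  have hden : (0:ℝ) < 18 * a + 17 := by linarith
  have hM0 : 0 < M := lt_min one_pos (by positivity)
  have hM1 : M ≤ 1 := min_le_left _ _
  have hMa : M ≤ a ^ 2 / (18 * a + 17) := min_le_right _ _
  clear_value M
  refine ⟨min (a * M) M, lt_min (by positivity) hM0, ?_⟩
  intro q ε c hq0 hqδ hc0 hcδ hqε hεδ K hK hKT
  show (1 - Real.exp (-(2 * T * (a + (1 - 1 / (N : ℝ)) * q + (1 - 1 / (N : ℝ)) ^ 2 * sInf (K '' Icc (0:ℝ) T))))) /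
        (a + (1 - 1 / (N : ℝ)) * q + (1 - 1 / (N : ℝ)) ^ 2 * sInf (K '' Icc (0:ℝ) T)) *
      ((1 - 1 / (N : ℝ)) ^ 2 *
        ((1 - 1 / (N : ℝ)) ^ 2 * sSup (K '' Icc (0:ℝ) T) ^ 2 +
         (q + (1 - 1 / (N : ℝ)) * sSup (K '' Icc (0:ℝ) T)) ^ 2 *
           ((1 - Real.exp (-(2 * T * (a + (1 - 1 / (N : ℝ)) * q + (1 - 1 / (N : ℝ)) ^ 2 * sInf (K '' Icc (0:ℝ) T))))) /
              (a + (1 - 1 / (N : ℝ)) * q + (1 - 1 / (N : ℝ)) ^ 2 * sInf (K '' Icc (0:ℝ) T)) *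
              (1 - 1 / (N : ℝ)) ^ 4 * sSup (K '' Icc (0:ℝ) T) ^ 2 + 2))) < 1
  have hδaM : min (a * M) M ≤ a * M := min_le_left _ _
  have hδM : min (a * M) M ≤ M := min_le_right _ _
  set g : ℝ := 1 - 1 / (N : ℝ) with hgdef
  have hg0 : 0 ≤ g := by
    have h2N : (2:ℝ) ≤ (N:ℝ) := by exact_mod_cast hN
    have hN0 : (0:ℝ) < (N:ℝ) := by linarith
    have : 1 / (N:ℝ) ≤ 1 / 2 := by
      rw [div_le_div_iff₀ hN0 (by norm_num)]; linarith
    simp only [hgdef]; linarith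
  have hg1 : g ≤ 1 := by
    have hN0 : (0:ℝ) < (N:ℝ) := by positivity
    have h1N : 0 < 1 / (N:ℝ) := by positivity
    simp only [hgdef]; linarith
  set lam : ℝ := ε - q ^ 2 with hlamdef
  have hlam0 : 0 ≤ lam := by simp only [hlamdef]; linarith
  set f : ℝ → ℝ := fun x => 2 * (a + g * q) * x + g ^ 2 * x ^ 2 - lam with hfdef
  have hK' : ∀ t ∈ Icc (0:ℝ) T, HasDerivAt K (f (K t)) t := hK
  clear_value f
  have hga : 0 ≤ g * q := mul_nonneg hg0 hq0
  have hg2le1 : g ^ 2 ≤ 1 := by nlinarith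
  clear_value g lam
  -- upper barrier
  have hup : ∀ t ∈ Icc (0:ℝ) T, K t < M := by
    apply no_cross_up T M K f hK'
    · simp only [hfdef]
      have h1 : lam < a * M := lt_of_lt_of_le hεδ hδaM
      nlinarith [mul_nonneg hga hM0.le, sq_nonneg (g * M), mul_pos ha hM0]
    · rw [hKT]; exact lt_of_lt_of_le hcδ hδM
  -- lower barrier
  have hlow : ∀ t ∈ Icc (0:ℝ) T, -(a / 2) < K t := by
    have h := no_cross_up T (a / 2) (fun t => -K t) (fun y => -(f (-y)))
      (fun t ht => by have h := (hK' t ht).neg; simp only [neg_neg]; exact h) ?_ ?_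
    · intro t ht; have h2 := h t ht; linarith
    · simp only [hfdef]
      show (0:ℝ) < -(2 * (a + g * q) * -(a / 2) + g ^ 2 * (-(a / 2)) ^ 2 - lam)
      nlinarith [mul_nonneg ha.le hga, mul_le_mul_of_nonneg_right hg2le1 (sq_nonneg (a/2)),
        pow_pos ha 2]
    · rw [hKT]; linarith
  -- image bounds
  have hne : (K '' Icc (0:ℝ) T).Nonempty := ⟨K T, T, ⟨hT.le, le_refl T⟩, rfl⟩
  have hbddA : BddAbove (K '' Icc (0:ℝ) T) := ⟨M, by rintro y ⟨t, ht, rfl⟩; exact (hup t ht).le⟩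
  set b : ℝ := sSup (K '' Icc (0:ℝ) T) with hbdef
  set m : ℝ := sInf (K '' Icc (0:ℝ) T) with hmdef
  have hbM : b ≤ M := csSup_le hne (by rintro y ⟨t, ht, rfl⟩; exact (hup t ht).le)
  have hb0 : 0 ≤ b := by
    have hTb : K T ≤ b := le_csSup hbddA ⟨T, ⟨hT.le, le_refl T⟩, rfl⟩
    rw [hKT] at hTb; linarith
  have hma : -(a/2) ≤ m := le_csInf hne (by rintro y ⟨t, ht, rfl⟩; exact (hlow t ht).le)
  clear_value b m
  clear hK hK' hup hlow hne hbddA hKT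
  -- glo bounds
  set glo : ℝ := a + g * q + g ^ 2 * m with hglodef
  have hglo : a / 2 ≤ glo := by
    have h1 : -(a/2) ≤ g ^ 2 * m := by
      nlinarith [mul_le_mul_of_nonneg_left hma (sq_nonneg g),
        mul_le_mul_of_nonneg_right hg2le1 (by linarith : (0:ℝ) ≤ a/2)]
    simp only [hglodef]; linarith
  clear_value glo
  have hglopos : 0 < glo := lt_of_lt_of_le (by linarith) hglo
  set r : ℝ := (1 - Real.exp (-(2 * T * glo))) / glo with hrdef
  have hexp0 : 0 < Real.exp (-(2 * T * glo)) := Real.exp_pos _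
  have hexp1 : Real.exp (-(2 * T * glo)) ≤ 1 := by
    rw [Real.exp_le_one_iff]
    nlinarith [mul_pos hT hglopos]
  have hr0 : 0 ≤ r := by
    rw [hrdef]; exact div_nonneg (by linarith) hglopos.le
  have hr2a : r ≤ 2 / a := by
    rw [hrdef, div_le_div_iff₀ hglopos ha]
    nlinarith [mul_nonneg hexp0.le ha.le]
  clear_value r
  -- final arithmetic
  have h2a : (0:ℝ) < 2 / a := by positivity
  have hqM : q ≤ M := le_of_lt (lt_of_lt_of_le hqδ hδM)
  have hCb : g ^ 2 * (g ^ 2 * b ^ 2 + (q + g * b) ^ 2 * (r * g ^ 4 * b ^ 2 + 2))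
      ≤ M ^ 2 + 4 * M ^ 2 * ((2 / a) * M ^ 2 + 2) := by
    have hb2 : b ^ 2 ≤ M ^ 2 := by nlinarith [mul_self_le_mul_self hb0 hbM]
    have h1 : g ^ 2 * b ^ 2 ≤ M ^ 2 := by
      linarith [mul_le_mul_of_nonneg_right hg2le1 (sq_nonneg b)]
    have hgbM : g * b ≤ M := by
      linarith [mul_le_mul_of_nonneg_right hg1 hb0]
    have h2 : (q + g * b) ^ 2 ≤ 4 * M ^ 2 := by
      have h0 : 0 ≤ q + g * b := by positivity
      nlinarith [mul_self_le_mul_self h0 (by linarith : q + g * b ≤ 2 * M)]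
    have h3 : r * g ^ 4 * b ^ 2 ≤ (2 / a) * M ^ 2 := by
      have hg4 : g ^ 4 ≤ 1 := by nlinarith [mul_self_le_mul_self (sq_nonneg g) hg2le1]
      have h4 : r * g ^ 4 * b ^ 2 ≤ r * b ^ 2 := by
        linarith [mul_le_mul_of_nonneg_left hg4 (mul_nonneg hr0 (sq_nonneg b))]
      have h5 : r * b ^ 2 ≤ (2 / a) * M ^ 2 :=
        mul_le_mul hr2a hb2 (sq_nonneg b) h2a.le
      linarith
    have hin : r * g ^ 4 * b ^ 2 + 2 ≤ (2 / a) * M ^ 2 + 2 := by linarith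
    have hinpos : (0:ℝ) ≤ r * g ^ 4 * b ^ 2 + 2 := by positivity
    have h5 : (q + g * b) ^ 2 * (r * g ^ 4 * b ^ 2 + 2) ≤ 4 * M ^ 2 * ((2 / a) * M ^ 2 + 2) :=
      mul_le_mul h2 hin hinpos (by positivity)
    have hX0 : (0:ℝ) ≤ g ^ 2 * b ^ 2 + (q + g * b) ^ 2 * (r * g ^ 4 * b ^ 2 + 2) := by positivity
    have h6 : g ^ 2 * (g ^ 2 * b ^ 2 + (q + g * b) ^ 2 * (r * g ^ 4 * b ^ 2 + 2))
        ≤ g ^ 2 * b ^ 2 + (q + g * b) ^ 2 * (r * g ^ 4 * b ^ 2 + 2) := by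
      linarith [mul_le_mul_of_nonneg_right hg2le1 hX0]
    linarith [h6, h1, h5]
  have hCpos : 0 ≤ g ^ 2 * (g ^ 2 * b ^ 2 + (q + g * b) ^ 2 * (r * g ^ 4 * b ^ 2 + 2)) := by
    positivity
  have hfinal : (2 / a) * (M ^ 2 + 4 * M ^ 2 * ((2 / a) * M ^ 2 + 2)) < 1 := by
    have hM2 : M ^ 2 ≤ M := by nlinarith
    have hM4 : M ^ 4 ≤ M := by nlinarith [sq_nonneg M, sq_nonneg (M ^ 2)]
    have h1 : M * (18 * a + 17) ≤ a ^ 2 := (le_div_iff₀ hden).mp hMa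
    have hkey : 18 * a * M ^ 2 + 16 * M ^ 4 < a ^ 2 := by
      linarith [mul_le_mul_of_nonneg_left hM2 (by linarith : (0:ℝ) ≤ 18 * a), hM4, h1, hM0]
    have expand : (2 / a) * (M ^ 2 + 4 * M ^ 2 * ((2 / a) * M ^ 2 + 2))
        = (18 * a * M ^ 2 + 16 * M ^ 4) / a ^ 2 := by
      field_simp; ring
    rw [expand, div_lt_one (by positivity)]
    exact hkey
  calc r * (g ^ 2 * (g ^ 2 * b ^ 2 + (q + g * b) ^ 2 * (r * g ^ 4 * b ^ 2 + 2)))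
      ≤ (2 / a) * (M ^ 2 + 4 * M ^ 2 * ((2 / a) * M ^ 2 + 2)) :=
        mul_le_mul hr2a hCb hCpos (by positivity)
    _ < 1 := hfinal
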